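/- (Convergence of the forward–backward / proximal-gradient algorithm.) Let g : ℝ^d → ℝ ∪ {+∞} be proper, convex, lower semicontinuous, let h : ℝ^d → ℝ be convex and differentiable with γ-Lipschitz gradient for some γ > 0, and let α ∈ (0, 2/γ). Assume there exist x* ∈ ℝ^d and u ∈ ∂g(x*) with u + ∇h(x*) = 0. Then for any initial point x_1 ∈ ℝ^d, the sequence defined by x_{k+1} = prox_{αg}( x_k − α ∇h(x_k) ) converges to some x̄ ∈ ℝ^d satisfying 0 ∈ ∂g(x̄) + ∇h(x̄); in particular x̄ is a global minimizer of g + h. -/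

import Mathlib

/-!
STATEMENT 6: Convergence of the forward–backward (proximal-gradient) algorithm.
Extended-real-valued functions ℝ^d → ℝ ∪ {+∞} are modeled as maps into `EReal`
that never take the value ⊥.
-/

open scoped RealInnerProductSpace
open Filter Topology

noncomputable section FB

variable {E : Type*} [NormedAddCommGroup E] [InnerProductSpace ℝ E] [CompleteSpace E]

lemma line_hasDerivAt (h : E → ℝ) (h' : E → E) (hg : ∀ x, HasGradientAt h (h' x) x)
    (x d : E) (t : ℝ) :
    HasDerivAt (fun s : ℝ => h (x + s • d)) ⟪h' (x + t • d), d⟫ t := by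
  have hc : HasDerivAt (fun s : ℝ => x + s • d) d t := by
    simpa using ((hasDerivAt_id t).smul_const d).const_add x
  have := ((hg (x + t • d)).hasFDerivAt.comp_hasDerivAt t hc)
  exact this

lemma grad_ineq (h : E → ℝ) (hh : ConvexOn ℝ Set.univ h) (h' : E → E)
    (hg : ∀ x, HasGradientAt h (h' x) x) (x y : E) :
    h x + ⟪h' x, y - x⟫ ≤ h y := by
  set d := y - x with hd
  set φ : ℝ → ℝ := fun s => h (x + s • d) with hφ
  have hder : HasDerivAt φ ⟪h' x, d⟫ 0 := by
    have := line_hasDerivAt h h' hg x d 0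
    simpa using this
  have hslope : Tendsto (slope φ 0) (𝓝[>] 0) (𝓝 ⟪h' x, d⟫) :=
    (hasDerivAt_iff_tendsto_slope.mp hder).mono_left
      (nhdsWithin_mono _ (by intro t ht; exact ne_of_gt ht))
  have hbound : ∀ t ∈ Set.Ioc (0:ℝ) 1, slope φ 0 t ≤ h y - h x := by
    intro t ht
    have hxt : x + t • d = (1 - t) • x + t • y := by
      rw [hd]; module
    have hcv := hh.2 (Set.mem_univ x) (Set.mem_univ y) (by linarith [ht.2] : (0:ℝ) ≤ 1 - t)
      (le_of_lt ht.1) (by ring)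
    have hφt : φ t ≤ (1 - t) * h x + t * h y := by
      rw [hφ]; simp only []; rw [hxt]; simpa [smul_eq_mul] using hcv
    have hφ0 : φ 0 = h x := by simp [hφ]
    rw [slope_def_field, sub_zero, div_le_iff₀ ht.1]
    nlinarith [ht.1]
  have hle : ⟪h' x, d⟫ ≤ h y - h x := by
    refine le_of_tendsto hslope ?_
    filter_upwards [Ioc_mem_nhdsGT_of_mem (by norm_num : (0:ℝ) ∈ Set.Ico (0:ℝ) 1)] with t ht
    exact hbound t ht
  linarith

lemma descent_lemma (h : E → ℝ) (h' : E → E)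
    (hg : ∀ x, HasGradientAt h (h' x) x) (γ : ℝ)
    (hlip : ∀ x y, ‖h' x - h' y‖ ≤ γ * ‖x - y‖) (x y : E) :
    h y ≤ h x + ⟪h' x, y - x⟫ + γ / 2 * ‖y - x‖ ^ 2 := by
  set d := y - x with hd
  set φ' : ℝ → ℝ := fun s => ⟪h' (x + s • d), d⟫ with hφ'
  have hcontg : Continuous h' := by
    refine (LipschitzWith.of_dist_le_mul (K := Real.toNNReal γ) ?_).continuous
    intro a b
    rw [dist_eq_norm, dist_eq_norm]
    exact le_trans (hlip a b)
      (mul_le_mul_of_nonneg_right (Real.le_coe_toNNReal γ) (norm_nonneg _))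
  have hcont : Continuous φ' := by
    apply Continuous.inner
    · exact hcontg.comp (by continuity)
    · exact continuous_const
  have hftc : (∫ t in (0:ℝ)..1, φ' t) = h y - h x := by
    have := intervalIntegral.integral_eq_sub_of_hasDerivAt
      (f := fun s : ℝ => h (x + s • d)) (f' := φ')
      (fun t _ => line_hasDerivAt h h' hg x d t)
      (hcont.intervalIntegrable 0 1)
    simpa [hd] using this
  have hmono : (∫ t in (0:ℝ)..1, φ' t) ≤ ∫ t in (0:ℝ)..1, (⟪h' x, d⟫ + γ * ‖d‖ ^ 2 * t) := by
    apply intervalIntegral.integral_mono_on (by norm_num) (hcont.intervalIntegrable 0 1)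
      ((by continuity : Continuous fun t : ℝ => ⟪h' x, d⟫ + γ * ‖d‖ ^ 2 * t).intervalIntegrable 0 1)
    intro t ht
    have : φ' t - ⟪h' x, d⟫ = ⟪h' (x + t • d) - h' x, d⟫ := by
      rw [hφ']; simp [inner_sub_left]
    have hb : ⟪h' (x + t • d) - h' x, d⟫ ≤ ‖h' (x + t • d) - h' x‖ * ‖d‖ :=
      real_inner_le_norm _ _
    have hl : ‖h' (x + t • d) - h' x‖ ≤ γ * (t * ‖d‖) := by
      have := hlip (x + t • d) x
      simpa [norm_smul, abs_of_nonneg ht.1] using this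
    have hdn : ‖h' (x + t • d) - h' x‖ * ‖d‖ ≤ γ * (t * ‖d‖) * ‖d‖ :=
      mul_le_mul_of_nonneg_right hl (norm_nonneg _)
    nlinarith [norm_nonneg d]
  have hint : (∫ t in (0:ℝ)..1, (⟪h' x, d⟫ + γ * ‖d‖ ^ 2 * t))
      = ⟪h' x, d⟫ + γ * ‖d‖ ^ 2 * (1 / 2) := by
    rw [intervalIntegral.integral_add
      (intervalIntegrable_const)
      ((by continuity : Continuous fun t : ℝ => γ * ‖d‖ ^ 2 * t).intervalIntegrable 0 1)]
    rw [intervalIntegral.integral_const_mul, integral_id]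
    norm_num
  rw [hftc] at hmono
  rw [hint] at hmono
  have : h y - h x ≤ ⟪h' x, d⟫ + γ * ‖d‖ ^ 2 / 2 := by linarith
  linarith

lemma bregman_lower (h : E → ℝ) (hh : ConvexOn ℝ Set.univ h) (h' : E → E)
    (hg : ∀ x, HasGradientAt h (h' x) x) (γ : ℝ) (hγ : 0 < γ)
    (hlip : ∀ x y, ‖h' x - h' y‖ ≤ γ * ‖x - y‖) (x y : E) :
    1 / (2 * γ) * ‖h' y - h' x‖ ^ 2 ≤ h y - h x - ⟪h' x, y - x⟫ := by
  set u := h' x with hu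
  set f : E → ℝ := fun z => h z - ⟪u, z⟫ with hf
  set f' : E → E := fun z => h' z - u with hf'
  have hfconv : ConvexOn ℝ Set.univ f := by
    refine hh.sub ?_
    refine ⟨convex_univ, ?_⟩
    intro a _ b _ s t hs ht hst
    simp only [inner_add_right, inner_smul_right, smul_eq_mul]
    exact le_of_eq (by ring)
  have hfg : ∀ z, HasGradientAt f (f' z) z := by
    intro z
    have h1 : HasFDerivAt h (InnerProductSpace.toDual ℝ E (h' z)) z :=
      (hg z).hasFDerivAt
    have h2 : HasFDerivAt (fun w : E => ⟪u, w⟫) (innerSL ℝ u) z :=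
      (innerSL ℝ u).hasFDerivAt
    have h3 := h1.sub h2
    rw [hasGradientAt_iff_hasFDerivAt]
    refine h3.congr_fderiv ?_
    apply ContinuousLinearMap.ext
    intro w
    simp [hf', inner_sub_left]
  have hflip : ∀ a b, ‖f' a - f' b‖ ≤ γ * ‖a - b‖ := by
    intro a b
    have : f' a - f' b = h' a - h' b := by simp [hf']
    rw [this]; exact hlip a b
  have hmin : ∀ z, f x ≤ f z := by
    intro z
    have := grad_ineq f hfconv f' hfg x z
    have hz : f' x = 0 := by simp [hf', hu]
    rw [hz] at this
    simpa using this
  have hdesc := descent_lemma f f' hfg γ hflip y (y - (1/γ) • f' y)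
  have hsimp1 : y - (1/γ) • f' y - y = -((1/γ) • f' y) := by abel
  rw [hsimp1] at hdesc
  have hsimp2 : ⟪f' y, -((1/γ) • f' y)⟫ = -(1/γ) * ‖f' y‖ ^ 2 := by
    rw [inner_neg_right, real_inner_smul_right, real_inner_self_eq_norm_sq]
    ring
  have hsimp3 : ‖-((1/γ) • f' y)‖ ^ 2 = (1/γ)^2 * ‖f' y‖ ^ 2 := by
    rw [norm_neg, norm_smul, Real.norm_eq_abs, abs_of_pos (by positivity : (0:ℝ) < 1/γ)]
    ring
  rw [hsimp2, hsimp3] at hdesc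
  have hkey : f x ≤ f y - 1/(2*γ) * ‖f' y‖ ^ 2 := by
    have := hmin (y - (1/γ) • f' y)
    have heq : f y + -(1 / γ) * ‖f' y‖ ^ 2 + γ / 2 * ((1 / γ) ^ 2 * ‖f' y‖ ^ 2)
        = f y - 1/(2*γ) * ‖f' y‖ ^ 2 := by
      field_simp
      ring
    linarith [heq ▸ hdesc]
  have hfy : f' y = h' y - h' x := by simp [hf', hu]
  have hfx : f x = h x - ⟪h' x, x⟫ := by simp [hf, hu]
  have hfy2 : f y = h y - ⟪h' x, y⟫ := by simp [hf, hu]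
  rw [hfy, hfx, hfy2] at hkey
  have hinner : ⟪h' x, y - x⟫ = ⟪h' x, y⟫ - ⟪h' x, x⟫ := inner_sub_right _ _ _
  linarith

lemma cocoercive (h : E → ℝ) (hh : ConvexOn ℝ Set.univ h) (h' : E → E)
    (hg : ∀ x, HasGradientAt h (h' x) x) (γ : ℝ) (hγ : 0 < γ)
    (hlip : ∀ x y, ‖h' x - h' y‖ ≤ γ * ‖x - y‖) (x y : E) :
    1 / γ * ‖h' x - h' y‖ ^ 2 ≤ ⟪h' x - h' y, x - y⟫ := by
  have h1 := bregman_lower h hh h' hg γ hγ hlip x y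
  have h2 := bregman_lower h hh h' hg γ hγ hlip y x
  have e1 : ‖h' x - h' y‖ = ‖h' y - h' x‖ := norm_sub_rev _ _
  have e2 : ⟪h' x - h' y, x - y⟫ = ⟪h' x, x - y⟫ - ⟪h' y, x - y⟫ := inner_sub_left _ _ _
  have e3 : ⟪h' x, y - x⟫ = -⟪h' x, x - y⟫ := by
    rw [inner_sub_right, inner_sub_right]; ring
  rw [e1] at h2
  rw [e1, e2]
  have hg2 : 1/γ = 2 * (1/(2*γ)) := by field_simp
  nlinarith [h1, h2, e3]

lemma ereal_real_of_le {a : EReal} (ha : a ≠ ⊥) {r : ℝ} (h : a ≤ (r : EReal)) :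
    ∃ s : ℝ, a = (s : EReal) := by
  induction a using EReal.rec with
  | bot => exact absurd rfl ha
  | coe s => exact ⟨s, rfl⟩
  | top => exact absurd h (not_le.mpr (EReal.coe_lt_top r))

lemma prox_subgrad (g : E → EReal) (hg_ne_bot : ∀ x, g x ≠ ⊥)
    (hg_convex : ∀ x y : E, ∀ t : ℝ, 0 ≤ t → t ≤ 1 →
      g (t • x + (1 - t) • y) ≤ (t : EReal) * g x + ((1 - t : ℝ) : EReal) * g y)
    (α : ℝ) (hα0 : 0 < α) (p w : E)
    (hmin : ∀ z, g p + ((1 / (2 * α) * ‖p - w‖ ^ 2 : ℝ) : EReal) ≤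
        g z + ((1 / (2 * α) * ‖z - w‖ ^ 2 : ℝ) : EReal))
    (gp : ℝ) (hgp : g p = (gp : EReal)) :
    ∀ z, g p + ((⟪α⁻¹ • (w - p), z - p⟫ : ℝ) : EReal) ≤ g z := by
  intro z
  rcases eq_or_ne (g z) ⊤ with hz | hz
  · rw [hz]; exact le_top
  obtain ⟨gz, hgz⟩ : ∃ s : ℝ, g z = (s : EReal) := by
    have h1 := hg_ne_bot z
    revert h1 hz
    induction g z using EReal.rec with
    | bot => intro h1 h2; exact absurd rfl h2
    | coe s => intro _ _; exact ⟨s, rfl⟩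
    | top => intro h1 _; exact absurd rfl h1
  rw [hgp, hgz, ← EReal.coe_add, EReal.coe_le_coe_iff]
  -- real-valued goal: gp + ⟪α⁻¹ • (w - p), z - p⟫ ≤ gz
  set c : ℝ := 1 / (2 * α) with hc
  have hc0 : 0 < c := by rw [hc]; positivity
  have key : ∀ t : ℝ, 0 < t → t ≤ 1 →
      gp + c * ‖p - w‖ ^ 2 ≤ t * gz + (1 - t) * gp + c * ‖t • z + (1 - t) • p - w‖ ^ 2 := by
    intro t ht0 ht1
    have h1 := hmin (t • z + (1 - t) • p)
    have h2 := hg_convex z p t ht0.le ht1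
    rw [hgz, hgp] at h2
    have h2' : g (t • z + (1 - t) • p) ≤ ((t * gz + (1 - t) * gp : ℝ) : EReal) := by
      refine le_trans h2 (le_of_eq ?_)
      rw [EReal.coe_add, EReal.coe_mul, EReal.coe_mul]
    have h3 : g (t • z + (1 - t) • p) + ((c * ‖t • z + (1 - t) • p - w‖ ^ 2 : ℝ) : EReal)
        ≤ ((t * gz + (1 - t) * gp + c * ‖t • z + (1 - t) • p - w‖ ^ 2 : ℝ) : EReal) := by
      rw [EReal.coe_add]
      exact add_le_add_left h2' _
    have h4 := le_trans h1 h3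
    rw [hgp, ← EReal.coe_add, EReal.coe_le_coe_iff] at h4
    exact h4
  -- expand the squared norm
  have hexp : ∀ t : ℝ, ‖t • z + (1 - t) • p - w‖ ^ 2
      = ‖p - w‖ ^ 2 + 2 * t * ⟪p - w, z - p⟫ + t ^ 2 * ‖z - p‖ ^ 2 := by
    intro t
    have heq : t • z + (1 - t) • p - w = (p - w) + t • (z - p) := by
      rw [sub_smul, smul_sub, one_smul]; abel
    rw [heq, norm_add_sq_real, real_inner_smul_right, norm_smul, Real.norm_eq_abs,
      mul_pow, sq_abs]
    ring
  have key2 : ∀ t : ℝ, 0 < t → t ≤ 1 →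
      α⁻¹ * ⟪w - p, z - p⟫ ≤ gz - gp + c * t * ‖z - p‖ ^ 2 := by
    intro t ht0 ht1
    have := key t ht0 ht1
    rw [hexp t] at this
    have h5 : 0 ≤ t * (gz - gp) + c * (2 * t * ⟪p - w, z - p⟫ + t ^ 2 * ‖z - p‖ ^ 2) := by
      nlinarith
    have h6 : -2 * c * ⟪p - w, z - p⟫ ≤ gz - gp + c * t * ‖z - p‖ ^ 2 := by
      have := (mul_le_mul_iff_right₀ ht0).mpr (le_refl (1:ℝ))
      nlinarith
    have h7 : α⁻¹ * ⟪w - p, z - p⟫ = -2 * c * ⟪p - w, z - p⟫ := by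
      have : (w - p : E) = -(p - w) := by abel
      rw [this, inner_neg_left, hc]
      field_simp
    linarith [h7 ▸ h6]
  have hfin : α⁻¹ * ⟪w - p, z - p⟫ ≤ gz - gp := by
    refine le_of_forall_pos_le_add ?_
    intro ε hε
    rcases le_or_gt (c * ‖z - p‖ ^ 2) 0 with hB | hB
    · have := key2 1 one_pos le_rfl
      nlinarith
    · set t := min 1 (ε / (c * ‖z - p‖ ^ 2)) with htdef
      have ht0 : 0 < t := lt_min one_pos (by positivity)
      have ht1 : t ≤ 1 := min_le_left _ _
      have := key2 t ht0 ht1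
      have htb : c * t * ‖z - p‖ ^ 2 ≤ ε := by
        have : t ≤ ε / (c * ‖z - p‖ ^ 2) := min_le_right _ _
        calc c * t * ‖z - p‖ ^ 2 = t * (c * ‖z - p‖ ^ 2) := by ring
          _ ≤ (ε / (c * ‖z - p‖ ^ 2)) * (c * ‖z - p‖ ^ 2) := by
              exact mul_le_mul_of_nonneg_right this hB.le
          _ = ε := div_mul_cancel₀ ε hB.ne'
      linarith
  have : ⟪α⁻¹ • (w - p), z - p⟫ = α⁻¹ * ⟪w - p, z - p⟫ := real_inner_smul_left _ _ _
  linarith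

lemma sq_le_imp {a b : ℝ} (ha : 0 ≤ a) (hb : 0 ≤ b) (h : a^2 ≤ b^2) : a ≤ b := by nlinarith

lemma ereal_le_coe_sub {a : EReal} {c r : ℝ} (h : a + (c : EReal) ≤ (r : EReal)) :
    a ≤ ((r - c : ℝ) : EReal) := by
  induction a using EReal.rec with
  | bot => exact bot_le
  | coe s =>
      rw [← EReal.coe_add, EReal.coe_le_coe_iff] at h
      rw [EReal.coe_le_coe_iff]; linarith
  | top =>
      exfalso
      rw [EReal.top_add_coe] at h
      exact absurd h (not_le.mpr (EReal.coe_lt_top r))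


set_option maxHeartbeats 1000000


theorem statement6 (d : ℕ)
    (g : EuclideanSpace ℝ (Fin d) → EReal)
    -- g is proper (never −∞, somewhere finite)
    (hg_ne_bot : ∀ x, g x ≠ ⊥) (hg_proper : ∃ x, g x ≠ ⊤)
    -- g is convex
    (hg_convex : ∀ x y : EuclideanSpace ℝ (Fin d), ∀ t : ℝ, 0 ≤ t → t ≤ 1 →
      g (t • x + (1 - t) • y) ≤ (t : EReal) * g x + ((1 - t : ℝ) : EReal) * g y)
    -- g is lower semicontinuous
    (hg_lsc : LowerSemicontinuous g)
    -- h is convex and differentiable with γ-Lipschitz gradient h'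
    (h : EuclideanSpace ℝ (Fin d) → ℝ)
    (hh_convex : ConvexOn ℝ Set.univ h)
    (h' : EuclideanSpace ℝ (Fin d) → EuclideanSpace ℝ (Fin d))
    (hh_grad : ∀ x, HasGradientAt h (h' x) x)
    (γ : ℝ) (hγ : 0 < γ)
    (hh_lip : ∀ x y, ‖h' x - h' y‖ ≤ γ * ‖x - y‖)
    -- step size α ∈ (0, 2/γ)
    (α : ℝ) (hα0 : 0 < α) (hα2 : α < 2 / γ)
    -- proxg = prox_{αg}: minimizer of z ↦ g(z) + (1/(2α))‖z − x‖²
    (proxg : EuclideanSpace ℝ (Fin d) → EuclideanSpace ℝ (Fin d))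
    (hproxg : ∀ x z : EuclideanSpace ℝ (Fin d),
      g (proxg x) + ((1 / (2 * α) * ‖proxg x - x‖ ^ 2 : ℝ) : EReal) ≤
        g z + ((1 / (2 * α) * ‖z - x‖ ^ 2 : ℝ) : EReal))
    -- there exist x* and u ∈ ∂g(x*) with u + ∇h(x*) = 0
    (xstar ustar : EuclideanSpace ℝ (Fin d))
    (hustar : ∀ z, g xstar + ((⟪ustar, z - xstar⟫ : ℝ) : EReal) ≤ g z)
    (hzero : ustar + h' xstar = 0)
    -- the forward–backward iteration, started from an arbitrary initial point x_1
    (x : ℕ → EuclideanSpace ℝ (Fin d))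
    (hx : ∀ k, x (k + 1) = proxg (x k - α • h' (x k))) :
    -- {x_k} converges to some x̄ satisfying 0 ∈ ∂g(x̄) + ∇h(x̄);
    -- in particular x̄ globally minimizes g + h
    ∃ xbar : EuclideanSpace ℝ (Fin d),
      Tendsto x atTop (𝓝 xbar) ∧
      (∃ u : EuclideanSpace ℝ (Fin d),
        (∀ z, g xbar + ((⟪u, z - xbar⟫ : ℝ) : EReal) ≤ g z) ∧
        u + h' xbar = 0) ∧
      ∀ z, g xbar + ((h xbar : ℝ) : EReal) ≤ g z + ((h z : ℝ) : EReal) := by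
  -- Step A: finiteness of relevant values of g
  obtain ⟨z₀, hz₀⟩ := hg_proper
  obtain ⟨r₀, hr₀⟩ : ∃ s : ℝ, g z₀ = (s : EReal) := by
    have h1 := hg_ne_bot z₀
    revert h1 hz₀
    induction g z₀ using EReal.rec with
    | bot => intro h1 h2; exact absurd rfl h2
    | coe s => intro _ _; exact ⟨s, rfl⟩
    | top => intro h1 _; exact absurd rfl h1
  obtain ⟨gstar, hgstar⟩ : ∃ r : ℝ, g xstar = (r : EReal) := by
    have h1 := hustar z₀
    rw [hr₀] at h1
    exact ereal_real_of_le (hg_ne_bot xstar) (ereal_le_coe_sub h1)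
  have hgprox : ∀ w, ∃ r : ℝ, g (proxg w) = (r : EReal) := by
    intro w
    have h1 := hproxg w z₀
    rw [hr₀, ← EReal.coe_add] at h1
    exact ereal_real_of_le (hg_ne_bot _) (ereal_le_coe_sub h1)
  choose gp hgp using hgprox
  -- Step B: subgradient inequality for the prox
  have hsub : ∀ w z, g (proxg w) + ((⟪α⁻¹ • (w - proxg w), z - proxg w⟫ : ℝ) : EReal) ≤ g z :=
    fun w => prox_subgrad g hg_ne_bot hg_convex α hα0 (proxg w) w (hproxg w) (gp w) (hgp w)
  have hsubR : ∀ w z (gz : ℝ), g z = (gz : EReal) →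
      gp w + ⟪α⁻¹ • (w - proxg w), z - proxg w⟫ ≤ gz := by
    intro w z gz hgz
    have := hsub w z
    rw [hgp w, hgz, ← EReal.coe_add, EReal.coe_le_coe_iff] at this
    exact this
  -- Step C: firm nonexpansiveness
  have hfirm : ∀ w1 w2, ‖proxg w1 - proxg w2‖^2 ≤ ⟪proxg w1 - proxg w2, w1 - w2⟫ := by
    intro w1 w2
    set p1 := proxg w1 with hp1
    set p2 := proxg w2 with hp2
    have h1 := hsubR w1 p2 (gp w2) (hgp w2)
    have h2 := hsubR w2 p1 (gp w1) (hgp w1)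
    rw [real_inner_smul_left] at h1 h2
    have hsum : ⟪w1 - p1, p2 - p1⟫ + ⟪w2 - p2, p1 - p2⟫ ≤ 0 := by
      have hα' : 0 < α⁻¹ := inv_pos.mpr hα0
      nlinarith [h1, h2]
    have hrw : ⟪w2 - p2, p1 - p2⟫ = ⟪p2 - w2, p2 - p1⟫ := by
      rw [show (p2 - w2 : EuclideanSpace ℝ (Fin d)) = -(w2 - p2) by abel,
        show (p2 - p1 : EuclideanSpace ℝ (Fin d)) = -(p1 - p2) by abel, inner_neg_neg]
    rw [hrw] at hsum
    rw [← inner_add_left] at hsum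
    have hvec : (w1 - p1) + (p2 - w2) = (w1 - w2) - (p1 - p2) := by abel
    rw [hvec, inner_sub_left] at hsum
    have hself : ⟪p1 - p2, p2 - p1⟫ = -‖p1 - p2‖^2 := by
      rw [show (p2 - p1 : EuclideanSpace ℝ (Fin d)) = -(p1 - p2) by abel, inner_neg_right,
        real_inner_self_eq_norm_sq]
    rw [hself] at hsum
    have hcomm : ⟪w1 - w2, p2 - p1⟫ = -⟪p1 - p2, w1 - w2⟫ := by
      rw [show (p2 - p1 : EuclideanSpace ℝ (Fin d)) = -(p1 - p2) by abel, inner_neg_right,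
        real_inner_comm]
    rw [hcomm] at hsum
    linarith
  -- Step D: nonexpansiveness
  have hnonexp : ∀ w1 w2, ‖proxg w1 - proxg w2‖ ≤ ‖w1 - w2‖ := by
    intro w1 w2
    have h1 := hfirm w1 w2
    have h2 := real_inner_le_norm (proxg w1 - proxg w2) (w1 - w2)
    nlinarith [norm_nonneg (proxg w1 - proxg w2), norm_nonneg (w1 - w2)]
  -- Step E: forward operator defect
  set β : ℝ := α * (2/γ - α) with hβdef
  have hβ : 0 < β := mul_pos hα0 (sub_pos.mpr hα2)
  have hforward : ∀ v z, ‖(v - α • h' v) - (z - α • h' z)‖^2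
      ≤ ‖v - z‖^2 - β * ‖h' v - h' z‖^2 := by
    intro v z
    have hco := cocoercive h hh_convex h' hh_grad γ hγ hh_lip v z
    have heq : (v - α • h' v) - (z - α • h' z) = (v - z) - α • (h' v - h' z) := by
      rw [smul_sub]; abel
    rw [heq, norm_sub_sq_real, real_inner_smul_right, norm_smul, Real.norm_eq_abs,
      abs_of_pos hα0, mul_pow]
    have hcomm : ⟪v - z, h' v - h' z⟫ = ⟪h' v - h' z, v - z⟫ := real_inner_comm _ _
    rw [hcomm]
    have hmul := mul_le_mul_of_nonneg_left hco (by positivity : (0:ℝ) ≤ 2*α)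
    have hdivγ : 2 * α * (1 / γ * ‖h' v - h' z‖^2) = α * (2/γ) * ‖h' v - h' z‖^2 := by
      ring
    nlinarith [hmul]
  -- Step F: xstar is a fixed point
  have hustar' : h' xstar = -ustar := by
    rw [eq_neg_iff_add_eq_zero, add_comm]; exact hzero
  have hfix : proxg (xstar - α • h' xstar) = xstar := by
    set w : EuclideanSpace ℝ (Fin d) := xstar - α • h' xstar with hwdef
    set p := proxg w with hpdef
    have h1 := hsubR w xstar gstar hgstar
    have h2 : gstar + ⟪ustar, p - xstar⟫ ≤ gp w := by
      have := hustar p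
      rw [hgstar, hgp w, ← EReal.coe_add, EReal.coe_le_coe_iff] at this
      exact this
    have hw : w - p = (xstar - p) + α • ustar := by
      rw [hwdef, hustar', smul_neg]; abel
    have hinner : ⟪α⁻¹ • (w - p), xstar - p⟫
        = α⁻¹ * ‖xstar - p‖^2 + ⟪ustar, xstar - p⟫ := by
      rw [hw, real_inner_smul_left, inner_add_left, real_inner_self_eq_norm_sq,
        real_inner_smul_left]
      set A : ℝ := ⟪ustar, xstar - p⟫ with hA
      field_simp
    have hiu : ⟪ustar, p - xstar⟫ = -⟪ustar, xstar - p⟫ := by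
      rw [show (p - xstar : EuclideanSpace ℝ (Fin d)) = -(xstar - p) by abel, inner_neg_right]
    have hα' : 0 < α⁻¹ := inv_pos.mpr hα0
    have hsq : ‖xstar - p‖^2 ≤ 0 := by nlinarith [h1, h2]
    have hz2 : xstar - p = 0 := by
      have h0 : ‖xstar - p‖ = 0 := by nlinarith [norm_nonneg (xstar - p)]
      rwa [norm_eq_zero] at h0
    have := eq_of_sub_eq_zero hz2
    exact this.symm
  -- Step G: key decrease inequality along the iteration
  have hkey : ∀ k, ‖x (k+1) - xstar‖^2
      + ‖(x k - α • h' (x k) - x (k+1)) - α • ustar‖^2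
      ≤ ‖x k - xstar‖^2 - β * ‖h' (x k) - h' xstar‖^2 := by
    intro k
    set w1 : EuclideanSpace ℝ (Fin d) := x k - α • h' (x k) with hw1
    set w2 : EuclideanSpace ℝ (Fin d) := xstar - α • h' xstar with hw2
    have hp1 : proxg w1 = x (k+1) := (hx k).symm
    have hp2 : proxg w2 = xstar := hfix
    have hf := hfirm w1 w2
    rw [hp1, hp2] at hf
    have hstep : ‖x (k+1) - xstar‖^2 + ‖(w1 - w2) - (x (k+1) - xstar)‖^2 ≤ ‖w1 - w2‖^2 := by
      nth_rewrite 2 [norm_sub_sq_real]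
      have := real_inner_comm (w1 - w2) (x (k+1) - xstar)
      nlinarith [hf]
    have hvec : (w1 - w2) - (x (k+1) - xstar) = (x k - α • h' (x k) - x (k+1)) - α • ustar := by
      rw [hw1, hw2, hustar', smul_neg]; abel
    rw [hvec] at hstep
    have hfw := hforward (x k) xstar
    rw [← hw1, ← hw2] at hfw
    linarith
  -- monotonicity of distances to xstar
  have hA : ∀ k, ‖x (k+1) - xstar‖ ≤ ‖x k - xstar‖ := by
    intro k
    have := hkey k
    refine sq_le_imp (norm_nonneg _) (norm_nonneg _) ?_
    nlinarith [sq_nonneg ‖(x k - α • h' (x k) - x (k+1)) - α • ustar‖,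
      mul_nonneg hβ.le (sq_nonneg ‖h' (x k) - h' xstar‖)]
  have hAnti : Antitone (fun k => ‖x k - xstar‖) := antitone_nat_of_succ_le hA
  -- limit of squared distances
  set q : ℕ → ℝ := fun k => ‖x k - xstar‖^2 with hqdef
  have hqanti : Antitone q := by
    refine antitone_nat_of_succ_le (fun k => ?_)
    have h1 := hA k
    have h2 := norm_nonneg (x (k+1) - xstar)
    simp only [hqdef]
    nlinarith
  have hqbdd : BddBelow (Set.range q) := ⟨0, by rintro _ ⟨k, rfl⟩; positivity⟩
  have hqlim : Tendsto q atTop (𝓝 (⨅ k, q k)) := tendsto_atTop_ciInf hqanti hqbdd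
  have hqdiff : Tendsto (fun k => q k - q (k+1)) atTop (𝓝 0) := by
    have h2 : Tendsto (fun k => q (k+1)) atTop (𝓝 (⨅ k, q k)) :=
      hqlim.comp (tendsto_add_atTop_nat 1)
    have := hqlim.sub h2
    simpa using this
  -- the two vanishing quantities
  have hsqueeze : ∀ (c : ℕ → ℝ) (M : ℝ), (∀ k, 0 ≤ c k) →
      (∀ k, c k ^ 2 ≤ M * (q k - q (k+1))) → Tendsto c atTop (𝓝 0) := by
    intro c M hc0 hcb
    have hM : Tendsto (fun k => M * (q k - q (k+1))) atTop (𝓝 0) := by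
      simpa using hqdiff.const_mul M
    have hsq : Tendsto (fun k => c k ^ 2) atTop (𝓝 0) :=
      squeeze_zero (fun k => sq_nonneg _) hcb hM
    have := (Real.continuous_sqrt.tendsto' 0 0 (by simp)).comp hsq
    have heq : Real.sqrt ∘ (fun k => c k ^ 2) = c := by
      funext k; exact Real.sqrt_sq (hc0 k)
    rwa [heq] at this
  have hgradlim : Tendsto (fun k => ‖h' (x k) - h' xstar‖) atTop (𝓝 0) := by
    refine hsqueeze _ β⁻¹ (fun k => norm_nonneg _) (fun k => ?_)
    have h2 := sq_nonneg ‖(x k - α • h' (x k) - x (k+1)) - α • ustar‖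
    have hb : β * ‖h' (x k) - h' xstar‖^2 ≤ q k - q (k+1) := by
      simp only [hqdef]; nlinarith [hkey k, h2]
    have := mul_le_mul_of_nonneg_left hb (inv_pos.mpr hβ).le
    rwa [← mul_assoc, inv_mul_cancel₀ hβ.ne', one_mul] at this
  have heklim : Tendsto (fun k => ‖(x k - α • h' (x k) - x (k+1)) - α • ustar‖) atTop (𝓝 0) := by
    refine hsqueeze _ 1 (fun k => norm_nonneg _) (fun k => ?_)
    rw [one_mul]
    have h2 := mul_nonneg hβ.le (sq_nonneg ‖h' (x k) - h' xstar‖)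
    have h3 := sq_nonneg ‖x (k+1) - xstar‖
    simp only [hqdef]
    nlinarith [hkey k]
  -- vanishing of consecutive differences
  have hsteplim : Tendsto (fun k => x (k+1) - x k) atTop (𝓝 0) := by
    have hnormlim : Tendsto (fun k => ‖x (k+1) - x k‖) atTop (𝓝 0) := by
      have hb : ∀ k, ‖x (k+1) - x k‖ ≤ ‖(x k - α • h' (x k) - x (k+1)) - α • ustar‖
          + α * ‖h' (x k) - h' xstar‖ := by
        intro k
        have hid : x (k+1) - x k = -((x k - α • h' (x k) - x (k+1)) - α • ustar)
            - α • (h' (x k) - h' xstar) := by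
          rw [smul_sub, hustar', smul_neg]; abel
        rw [hid]
        refine le_trans (norm_sub_le _ _) ?_
        rw [norm_neg, norm_smul, Real.norm_eq_abs, abs_of_pos hα0]
      have hlim2 : Tendsto (fun k => ‖(x k - α • h' (x k) - x (k+1)) - α • ustar‖
          + α * ‖h' (x k) - h' xstar‖) atTop (𝓝 0) := by
        have := heklim.add (hgradlim.const_mul α)
        simpa using this
      exact squeeze_zero (fun k => norm_nonneg _) hb hlim2
    exact tendsto_zero_iff_norm_tendsto_zero.mpr hnormlim
  -- Step H: convergent subsequence
  have hball : ∀ k, x k ∈ Metric.closedBall xstar ‖x 0 - xstar‖ := by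
    intro k
    rw [Metric.mem_closedBall, dist_eq_norm]
    exact hAnti (Nat.zero_le k)
  obtain ⟨xbar, -, φ, hφmono, hφlim⟩ :=
    (isCompact_closedBall xstar ‖x 0 - xstar‖).tendsto_subseq hball
  -- Step I: xbar is a fixed point
  have hconth' : Continuous h' := by
    refine (LipschitzWith.of_dist_le_mul (K := Real.toNNReal γ) ?_).continuous
    intro a b
    rw [dist_eq_norm, dist_eq_norm]
    exact le_trans (hh_lip a b)
      (mul_le_mul_of_nonneg_right (Real.le_coe_toNNReal γ) (norm_nonneg _))
  have hcontT : Continuous (fun v : EuclideanSpace ℝ (Fin d) => proxg (v - α • h' v)) := by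
    have hlipprox : LipschitzWith 1 proxg := by
      refine LipschitzWith.of_dist_le_mul ?_
      intro a b
      rw [dist_eq_norm, dist_eq_norm]
      simpa using hnonexp a b
    exact hlipprox.continuous.comp (continuous_id.sub (hconth'.const_smul α))
  have hφatTop : Tendsto φ atTop atTop := hφmono.tendsto_atTop
  have hlim1 : Tendsto (fun j => x (φ j + 1)) atTop (𝓝 xbar) := by
    have hd : Tendsto (fun j => x (φ j + 1) - x (φ j)) atTop (𝓝 0) :=
      hsteplim.comp hφatTop
    have := hd.add hφlim
    simpa using this
  have hlim2 : Tendsto (fun j => x (φ j + 1)) atTop (𝓝 (proxg (xbar - α • h' xbar))) := by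
    have hcomp : (fun j => x (φ j + 1))
        = (fun v : EuclideanSpace ℝ (Fin d) => proxg (v - α • h' v)) ∘ (fun j => x (φ j)) := by
      funext j; exact hx (φ j)
    rw [hcomp]
    exact (hcontT.tendsto xbar).comp hφlim
  have hfixbar : proxg (xbar - α • h' xbar) = xbar := tendsto_nhds_unique hlim2 hlim1
  -- Step J: full convergence to xbar
  have hb1 : ∀ k, ‖x (k+1) - xbar‖ ≤ ‖x k - xbar‖ := by
    intro k
    rw [hx k]
    nth_rewrite 1 [← hfixbar]
    refine le_trans (hnonexp _ _) ?_
    have h2 := hforward (x k) xbar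
    refine sq_le_imp (norm_nonneg _) (norm_nonneg _) ?_
    nlinarith [mul_nonneg hβ.le (sq_nonneg ‖h' (x k) - h' xbar‖)]
  have hbanti : Antitone (fun k => ‖x k - xbar‖) := antitone_nat_of_succ_le hb1
  have hblim0 : Tendsto (fun k => ‖x k - xbar‖) atTop (𝓝 0) := by
    have hbbdd : BddBelow (Set.range fun k => ‖x k - xbar‖) :=
      ⟨0, by rintro _ ⟨k, rfl⟩; positivity⟩
    have hblim := tendsto_atTop_ciInf hbanti hbbdd
    have hsubz : Tendsto (fun j => ‖x (φ j) - xbar‖) atTop (𝓝 0) := by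
      have h0 : Tendsto (fun j => x (φ j) - xbar) atTop (𝓝 0) := by
        simpa using hφlim.sub_const xbar
      exact tendsto_zero_iff_norm_tendsto_zero.mp h0
    have hsub2 : Tendsto (fun j => ‖x (φ j) - xbar‖) atTop
        (𝓝 (⨅ k, ‖x k - xbar‖)) := hblim.comp hφatTop
    have hiz : (⨅ k, ‖x k - xbar‖) = 0 := tendsto_nhds_unique hsub2 hsubz
    rwa [hiz] at hblim
  have hxlim : Tendsto x atTop (𝓝 xbar) := by
    rw [tendsto_iff_norm_sub_tendsto_zero]
    exact hblim0
  -- Step K: optimality of xbar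
  have hvu : α⁻¹ • ((xbar - α • h' xbar) - xbar) = -h' xbar := by
    have h0 : (xbar - α • h' xbar) - xbar = -(α • h' xbar) := by abel
    rw [h0, smul_neg, smul_smul, inv_mul_cancel₀ hα0.ne', one_smul]
  have hsb : ∀ z, g xbar + ((⟪-h' xbar, z - xbar⟫ : ℝ) : EReal) ≤ g z := by
    intro z
    have h0 := hsub (xbar - α • h' xbar) z
    rw [hfixbar] at h0
    rwa [hvu] at h0
  have hgbar : g xbar = ((gp (xbar - α • h' xbar) : ℝ) : EReal) := by
    have := hgp (xbar - α • h' xbar)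
    rwa [hfixbar] at this
  set gbar : ℝ := gp (xbar - α • h' xbar) with hgbardef
  refine ⟨xbar, hxlim, ⟨-h' xbar, hsb, by abel⟩, ?_⟩
  intro z
  rcases eq_or_ne (g z) ⊤ with hzt | hzt
  · rw [hzt, EReal.top_add_coe]
    exact le_top
  obtain ⟨gz, hgz⟩ : ∃ s : ℝ, g z = (s : EReal) := by
    have h1 := hg_ne_bot z
    revert h1 hzt
    induction g z using EReal.rec with
    | bot => intro h1 h2; exact absurd rfl h2
    | coe s => intro _ _; exact ⟨s, rfl⟩
    | top => intro h1 _; exact absurd rfl h1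
  have hsz : gbar + ⟪-h' xbar, z - xbar⟫ ≤ gz := by
    have := hsb z
    rw [hgbar, hgz, ← EReal.coe_add, EReal.coe_le_coe_iff] at this
    exact this
  have hhz : h xbar + ⟪h' xbar, z - xbar⟫ ≤ h z :=
    grad_ineq h hh_convex h' hh_grad xbar z
  have hneg : ⟪-h' xbar, z - xbar⟫ = -⟪h' xbar, z - xbar⟫ := inner_neg_left _ _
  rw [hgbar, hgz, ← EReal.coe_add, ← EReal.coe_add, EReal.coe_le_coe_iff]
  linarith


end FB
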